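/- Let a ∈ (0,1), f₁ : [0,a] → [0,1] a C¹ expanding diffeomorphism with f₁(0)=0, f₁(a)=1, and let f : [0,1] → [0,1] be its unique Lebesgue-preserving full-branch extension with second branch f₂ : [a,1] → [0,1]. Then the induced degree-2 circle map (obtained by identifying 0 ∼ 1) is C¹ if and only if f₁'(0) = f₁'(a)/(f₁'(a) − 1). -/
import Mathlib


open MeasureTheory Set

/-- The Lebesgue-preserving full-branch extension of
`f₁ : [0,a] → [0,1]` induces a C¹ degree-2 circle map (i.e. the one-sided derivatives
match at the branch point `a` and at `0 ∼ 1`) iff `f₁'(0) = f₁'(a)/(f₁'(a) − 1)`. -/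
theorem stmt8 (a : ℝ) (ha : a ∈ Ioo (0:ℝ) 1)
    (f₁ f₁' g₁ f₂ f₂' : ℝ → ℝ)
    (hf₁d : ∀ x ∈ Icc (0:ℝ) a, HasDerivWithinAt f₁ (f₁' x) (Icc 0 a) x)
    (hf₁c : ContinuousOn f₁' (Icc 0 a))
    (hf₁e : ∀ x ∈ Icc (0:ℝ) a, 1 < f₁' x)
    (hf₁0 : f₁ 0 = 0) (hf₁a : f₁ a = 1)
    (hg₁ : ∀ x ∈ Icc (0:ℝ) a, g₁ (f₁ x) = x)
    (hg₁' : ∀ y ∈ Icc (0:ℝ) 1, g₁ y ∈ Icc 0 a ∧ f₁ (g₁ y) = y)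
    (hf₂d : ∀ x ∈ Icc a (1:ℝ), HasDerivWithinAt f₂ (f₂' x) (Icc a 1) x)
    (hf₂c : ContinuousOn f₂' (Icc a 1))
    (hf₂a : f₂ a = 0) (hf₂1 : f₂ 1 = 1)
    (hODE : ∀ x ∈ Icc a (1:ℝ),
      f₂' x = f₁' (g₁ (f₂ x)) / (f₁' (g₁ (f₂ x)) - 1))
    (hpres : Measure.map (fun x => if x < a then f₁ x else f₂ x)
        (volume.restrict (Icc (0:ℝ) 1)) = volume.restrict (Icc (0:ℝ) 1)) :
    (f₂' a = f₁' a ∧ f₂' 1 = f₁' 0) ↔ f₁' 0 = f₁' a / (f₁' a - 1) := by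
  have ha0 : (0:ℝ) ∈ Icc (0:ℝ) a := ⟨le_refl 0, ha.1.le⟩
  have haa : a ∈ Icc (0:ℝ) a := ⟨ha.1.le, le_refl a⟩
  have hA : 1 < f₁' 0 := hf₁e 0 ha0
  have hB : 1 < f₁' a := hf₁e a haa
  have hg0 : g₁ 0 = 0 := by have := hg₁ 0 ha0; rwa [hf₁0] at this
  have hga : g₁ 1 = a := by have := hg₁ a haa; rwa [hf₁a] at this
  have h2a : f₂' a = f₁' 0 / (f₁' 0 - 1) := by
    have := hODE a ⟨le_refl a, ha.2.le⟩
    rwa [hf₂a, hg0] at this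
  have h21 : f₂' 1 = f₁' a / (f₁' a - 1) := by
    have := hODE 1 ⟨ha.2.le, le_refl 1⟩
    rwa [hf₂1, hga] at this
  have hA1 : f₁' 0 - 1 ≠ 0 := by linarith
  have hB1 : f₁' a - 1 ≠ 0 := by linarith
  rw [h2a, h21]
  constructor
  · rintro ⟨h1, -⟩
    field_simp at h1 ⊢
    nlinarith [h1]
  · intro h
    constructor
    · field_simp at h ⊢
      nlinarith [h]
    · exact h.symm ▸ rfl
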